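/- Let k be a positive integer, G a k-edge-connected graph, and X ⊆ V(G). Then the following are equivalent: (i) there exists a partition (X₁,…,X_t) of X such that d_G(X_i) = k for all i; (ii) for every x ∈ X there exists a set S_x ⊆ X with x ∈ S_x and d_G(S_x) = k. -/

import Mathlib

/-- A multigraph on vertex type `V`, given by symmetric loopless edge multiplicities. -/
structure Multigraph (V : Type*) where
  mult : V → V → ℕ
  symm : ∀ u v, mult u v = mult v u
  loopless : ∀ v, mult v v = 0

/-- The size `d_G(S)` of the cut of `G` determined by `S`. -/
def Multigraph.cut {V : Type*} [Fintype V] [DecidableEq V] (G : Multigraph V)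
    (S : Finset V) : ℕ :=
  ∑ u ∈ S, ∑ v ∈ Sᶜ, G.mult u v

section Aux
variable {V : Type*} [Fintype V] [DecidableEq V]

lemma cut_eq (G : Multigraph V) (S : Finset V) :
    G.cut S = ∑ u, ∑ v, if u ∈ S ∧ v ∉ S then G.mult u v else 0 := by
  unfold Multigraph.cut
  have : (∑ u, ∑ v, if u ∈ S ∧ v ∉ S then G.mult u v else 0)
      = ∑ u, if u ∈ S then (∑ v, if v ∈ Sᶜ then G.mult u v else 0) else 0 := by
    refine Finset.sum_congr rfl fun u _ => ?_
    split_ifs with h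
    · exact Finset.sum_congr rfl fun v _ => by simp [h]
    · exact Finset.sum_eq_zero fun v _ => by simp [h]
  rw [this, Finset.sum_ite_mem, Finset.univ_inter]
  exact Finset.sum_congr rfl fun u _ => by rw [Finset.sum_ite_mem, Finset.univ_inter]

lemma cut_submod (G : Multigraph V) (A B : Finset V) :
    G.cut (A ∩ B) + G.cut (A ∪ B) ≤ G.cut A + G.cut B := by
  simp only [cut_eq, ← Finset.sum_add_distrib]
  refine Finset.sum_le_sum fun u _ => Finset.sum_le_sum fun v _ => ?_
  by_cases hA : u ∈ A <;> by_cases hB : u ∈ B <;> by_cases hvA : v ∈ A <;> by_cases hvB : v ∈ B <;>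
    simp [Finset.mem_inter, Finset.mem_union, hA, hB, hvA, hvB]

lemma cut_compl (G : Multigraph V) (S : Finset V) : G.cut Sᶜ = G.cut S := by
  unfold Multigraph.cut
  rw [compl_compl, Finset.sum_comm]
  exact Finset.sum_congr rfl fun u _ => Finset.sum_congr rfl fun v _ => G.symm v u

lemma main_aux (G : Multigraph V) (k : ℕ) (hk : 1 ≤ k)
    (hconn : ∀ S : Finset V, S.Nonempty → S ≠ Finset.univ → k ≤ G.cut S) :
    ∀ n (X : Finset V), X.card ≤ n → (∀ x ∈ X, ∃ S ⊆ X, x ∈ S ∧ G.cut S = k) →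
    ∃ P : Finset (Finset V), (↑P : Set (Finset V)).PairwiseDisjoint id ∧
      P.biUnion id = X ∧ ∀ A ∈ P, G.cut A = k := by
  intro n
  induction n with
  | zero =>
    intro X hX _
    have : X = ∅ := Finset.card_eq_zero.mp (Nat.le_zero.mp hX)
    subst this
    exact ⟨∅, by simp, by simp, by simp⟩
  | succ n ih =>
    intro X hX hprop
    rcases X.eq_empty_or_nonempty with rfl | ⟨x, hx⟩
    · exact ⟨∅, by simp, by simp, by simp⟩
    obtain ⟨S0, hS0X, hxS0, hS0cut⟩ := hprop x hx
    set T := X.powerset.filter (fun S => G.cut S = k) with hT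
    have hTne : T.Nonempty := ⟨S0, by simp [hT, Finset.mem_powerset, hS0X, hS0cut]⟩
    obtain ⟨S, hST, hSmax⟩ := T.exists_maximal hTne
    have hSX : S ⊆ X := Finset.mem_powerset.mp (Finset.mem_filter.mp hST).1
    have hScut : G.cut S = k := (Finset.mem_filter.mp hST).2
    have hSne : S.Nonempty := by
      rcases S.eq_empty_or_nonempty with rfl | h
      · exfalso; simp [Multigraph.cut] at hScut; omega
      · exact h
    have key : ∀ y ∈ X \ S, ∃ T' ⊆ X \ S, y ∈ T' ∧ G.cut T' = k := by
      intro y hy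
      obtain ⟨hyX, hyS⟩ := Finset.mem_sdiff.mp hy
      obtain ⟨B, hBX, hyB, hBcut⟩ := hprop y hyX
      by_cases hint : (B ∩ S).Nonempty
      · by_cases huniv : B ∪ S = Finset.univ
        · have hXu : X = Finset.univ := by
            apply Finset.eq_univ_of_forall
            intro a
            have : a ∈ B ∪ S := huniv ▸ Finset.mem_univ a
            rcases Finset.mem_union.mp this with h | h
            · exact hBX h
            · exact hSX h
          refine ⟨Sᶜ, ?_, Finset.mem_compl.mpr hyS, by rw [cut_compl]; exact hScut⟩
          intro a ha
          exact Finset.mem_sdiff.mpr ⟨hXu ▸ Finset.mem_univ a, Finset.mem_compl.mp ha⟩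
        · exfalso
          have hIne : B ∩ S ≠ Finset.univ := by
            intro h
            apply huniv
            apply Finset.eq_univ_of_forall
            intro a
            exact Finset.mem_union.mpr (Or.inl (Finset.mem_inter.mp (h ▸ Finset.mem_univ a)).1)
          have h1 : k ≤ G.cut (B ∩ S) := hconn _ hint hIne
          have h2 : k ≤ G.cut (B ∪ S) := hconn _ ⟨y, Finset.mem_union.mpr (Or.inl hyB)⟩ huniv
          have h3 := cut_submod G B S
          rw [hBcut, hScut] at h3
          have hcutU : G.cut (B ∪ S) = k := by omega
          apply (fun hm hlt => hlt.not_ge (hSmax hm hlt.le) : B ∪ S ∈ T → S < B ∪ S → False)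
          · refine Finset.mem_filter.mpr ⟨Finset.mem_powerset.mpr ?_, hcutU⟩
            exact Finset.union_subset hBX hSX
          · rw [Finset.lt_iff_ssubset, Finset.ssubset_def]
            refine ⟨Finset.subset_union_right, fun h => hyS (h (Finset.mem_union.mpr (Or.inl hyB)))⟩
      · refine ⟨B, ?_, hyB, hBcut⟩
        intro a ha
        exact Finset.mem_sdiff.mpr ⟨hBX ha,
          fun h => hint ⟨a, Finset.mem_inter.mpr ⟨ha, h⟩⟩⟩
    have hcard : (X \ S).card ≤ n := by
      obtain ⟨s0, hs0⟩ := hSne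
      have hss : X \ S ⊂ X := by
        rw [Finset.ssubset_def]
        exact ⟨Finset.sdiff_subset, fun h =>
          (Finset.mem_sdiff.mp (h (hSX hs0))).2 hs0⟩
      have := Finset.card_lt_card hss
      omega
    obtain ⟨P', hd', hu', hc'⟩ := ih (X \ S) hcard key
    refine ⟨insert S P', ?_, ?_, ?_⟩
    · rw [Finset.coe_insert]
      refine hd'.insert fun A hA _ => ?_
      have hAsub : A ⊆ X \ S := hu' ▸ fun a ha => Finset.mem_biUnion.mpr ⟨A, hA, ha⟩
      rw [Finset.disjoint_left]
      exact fun a haS haA => (Finset.mem_sdiff.mp (hAsub haA)).2 haS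
    · rw [Finset.biUnion_insert, hu']
      simp only [id]
      exact Finset.union_sdiff_of_subset hSX
    · intro A hA
      rcases Finset.mem_insert.mp hA with rfl | h
      · exact hScut
      · exact hc' A h

end Aux

/-- In a `k`-edge-connected graph `G`, a set `X` admits a partition into parts each with
cut size exactly `k` iff every `x ∈ X` lies in some `S ⊆ X` with cut size exactly `k`. -/
theorem stmt_5 {V : Type*} [Fintype V] [DecidableEq V] (G : Multigraph V) (k : ℕ)
    (hk : 1 ≤ k)
    (hconn : ∀ S : Finset V, S.Nonempty → S ≠ Finset.univ → k ≤ G.cut S)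
    (X : Finset V) :
    (∃ P : Finset (Finset V), (↑P : Set (Finset V)).PairwiseDisjoint id ∧
        P.biUnion id = X ∧ ∀ A ∈ P, G.cut A = k) ↔
      (∀ x ∈ X, ∃ S ⊆ X, x ∈ S ∧ G.cut S = k) := by
  constructor
  · rintro ⟨P, _, hunion, hcut⟩ x hx
    rw [← hunion] at hx
    obtain ⟨A, hA, hxA⟩ := Finset.mem_biUnion.mp hx
    refine ⟨A, ?_, hxA, hcut A hA⟩
    rw [← hunion]
    exact fun a ha => Finset.mem_biUnion.mpr ⟨A, hA, ha⟩
  · intro h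
    exact main_aux G k hk hconn X.card X le_rfl h
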